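/- Define q̄(ψ) = E[tanh(ψ^{1/2} Z)²] for ψ ≥ 0, where Z is a standard Gaussian random variable. Then for all ψ ≥ 0, the derivative satisfies max{0, 1 − 4ψ} ≤ dq̄/dψ ≤ 1. -/

import Mathlib

open MeasureTheory ProbabilityTheory

namespace QbarAux

open Real Filter Set Topology NNReal ENNReal

/-! ### Hyperbolic tangent facts -/

lemma hasDerivAt_tanh (x : ℝ) : HasDerivAt Real.tanh (1 - Real.tanh x ^ 2) x := by
  have h : Real.cosh x ≠ 0 := (Real.cosh_pos x).ne'
  have h2 := (Real.hasDerivAt_sinh x).div (Real.hasDerivAt_cosh x) h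
  have : (fun y => Real.sinh y / Real.cosh y) = Real.tanh := by
    ext y; exact (Real.tanh_eq_sinh_div_cosh y).symm
  rw [show (Real.sinh / Real.cosh) = Real.tanh from this] at h2
  refine h2.congr_deriv (Eq.symm ?_)
  have h3 := Real.cosh_sq_sub_sinh_sq x
  rw [Real.tanh_eq_sinh_div_cosh]
  field_simp

lemma tanh_sq_lt_one (x : ℝ) : Real.tanh x ^ 2 < 1 := by
  have h : Real.cosh x ≠ 0 := (Real.cosh_pos x).ne'
  have h3 := Real.cosh_sq_sub_sinh_sq x
  rw [Real.tanh_eq_sinh_div_cosh, div_pow]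
  rw [div_lt_one (by positivity)]
  nlinarith

lemma tanh_nonneg {x : ℝ} (hx : 0 ≤ x) : 0 ≤ Real.tanh x := by
  rw [Real.tanh_eq_sinh_div_cosh]
  exact div_nonneg (Real.sinh_nonneg_iff.2 hx) (Real.cosh_pos x).le

lemma tanh_le_self {x : ℝ} (hx : 0 ≤ x) : Real.tanh x ≤ x := by
  have hmono : Monotone (fun y : ℝ => y - Real.tanh y) := by
    apply monotone_of_deriv_nonneg
    · exact fun y => (differentiable_id.differentiableAt).sub (hasDerivAt_tanh y).differentiableAt
    · intro y
      have := ((hasDerivAt_id' y).sub (hasDerivAt_tanh y)).deriv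
      rw [show (fun y : ℝ => y - Real.tanh y) = ((fun x => x) - Real.tanh) from rfl, this]
      nlinarith [sq_nonneg (Real.tanh y)]
  have := hmono hx
  simpa using this

lemma tanh_sq_le_sq (x : ℝ) : Real.tanh x ^ 2 ≤ x ^ 2 := by
  rcases le_total 0 x with h | h
  · nlinarith [tanh_le_self h, tanh_nonneg h]
  · have h' : 0 ≤ -x := by linarith
    have := tanh_le_self h'
    rw [Real.tanh_neg] at this
    nlinarith [tanh_nonneg h', Real.tanh_neg x]

lemma sub_cube_le_tanh {x : ℝ} (hx : 0 ≤ x) : x - x ^ 3 / 3 ≤ Real.tanh x := by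
  have hmono : Monotone (fun y : ℝ => Real.tanh y - y + y ^ 3 / 3) := by
    apply monotone_of_deriv_nonneg
    · intro y
      exact (((hasDerivAt_tanh y).sub (hasDerivAt_id' y)).add
        (((hasDerivAt_pow 3 y).div_const 3))).differentiableAt
    · intro y
      have := (((hasDerivAt_tanh y).sub (hasDerivAt_id' y)).add
        (((hasDerivAt_pow 3 y).div_const 3))).deriv
      rw [show (fun y : ℝ => Real.tanh y - y + y ^ 3 / 3) =
        ((Real.tanh - fun x => x) + fun x => x ^ 3 / 3) from rfl, this]
      have := tanh_sq_le_sq y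
      push_cast
      nlinarith
  have := hmono hx
  simp only [Real.tanh_zero] at this
  norm_num at this
  linarith

lemma continuous_tanh : Continuous Real.tanh := by
  have : Real.tanh = fun x => Real.sinh x / Real.cosh x := funext Real.tanh_eq_sinh_div_cosh
  rw [this]
  exact Real.continuous_sinh.div Real.continuous_cosh fun x => (Real.cosh_pos x).ne'

/-! ### Pointwise inequalities -/

lemma mul_tanh_nonneg (a : ℝ) : 0 ≤ a * Real.tanh a := by
  rcases le_total 0 a with h | h
  · exact mul_nonneg h (tanh_nonneg h)
  · have h' : 0 ≤ -a := by linarith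
    have := tanh_nonneg h'
    rw [Real.tanh_neg] at this
    nlinarith

lemma P_nonneg (a : ℝ) : 0 ≤ a * Real.tanh a * (1 - Real.tanh a ^ 2) := by
  have h2 := tanh_sq_lt_one a
  nlinarith [mul_tanh_nonneg a]

lemma mul_tanh_le_sq (a : ℝ) : a * Real.tanh a ≤ a ^ 2 := by
  rcases le_total 0 a with h | h
  · nlinarith [tanh_le_self h]
  · have h' : 0 ≤ -a := by linarith
    have := tanh_le_self h'
    rw [Real.tanh_neg] at this
    nlinarith

lemma P_le_sq (a : ℝ) : a * Real.tanh a * (1 - Real.tanh a ^ 2) ≤ a ^ 2 := by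
  nlinarith [mul_tanh_le_sq a, mul_nonneg (mul_tanh_nonneg a) (sq_nonneg (Real.tanh a))]

lemma sq_sub_P_le_aux {a : ℝ} (ha : 0 ≤ a) :
    a ^ 2 - a * Real.tanh a * (1 - Real.tanh a ^ 2) ≤ 4 / 3 * a ^ 4 := by
  rcases le_total (3/4 : ℝ) (a ^ 2) with h | h
  · nlinarith [P_nonneg a, sq_nonneg a]
  · set t := Real.tanh a with ht
    have ha1 : a ≤ 1 := by nlinarith
    have ht1 : a - a ^ 3 / 3 ≤ t := sub_cube_le_tanh ha
    have ht3 : 0 ≤ t := tanh_nonneg ha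
    have ht4 : t ^ 2 ≤ a ^ 2 := tanh_sq_le_sq a
    have e2 : (0:ℝ) ≤ 1 - a ^ 2 := by nlinarith
    have e3 : (a - a ^ 3 / 3) * (1 - a ^ 2) ≤ t * (1 - t ^ 2) := by
      have h5 : 1 - a ^ 2 ≤ 1 - t ^ 2 := by nlinarith
      exact mul_le_mul ht1 h5 e2 ht3
    have e4 : a * ((a - a ^ 3 / 3) * (1 - a ^ 2)) ≤ a * (t * (1 - t ^ 2)) :=
      mul_le_mul_of_nonneg_left e3 ha
    nlinarith [pow_nonneg ha 6]

lemma sq_sub_P_le (a : ℝ) :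
    a ^ 2 - a * Real.tanh a * (1 - Real.tanh a ^ 2) ≤ 4 / 3 * a ^ 4 := by
  rcases le_total 0 a with h | h
  · exact sq_sub_P_le_aux h
  · have h' : 0 ≤ -a := by linarith
    have := sq_sub_P_le_aux h'
    rw [Real.tanh_neg] at this
    nlinarith

lemma sq_sub_tanh_sq_le_aux {a : ℝ} (ha : 0 ≤ a) :
    a ^ 2 - Real.tanh a ^ 2 ≤ 2 / 3 * a ^ 4 := by
  have ht1 := sub_cube_le_tanh ha
  have ht2 := tanh_le_self ha
  have ht3 := tanh_nonneg ha
  have key : (a - Real.tanh a) * (a + Real.tanh a) ≤ a ^ 3 / 3 * (2 * a) := by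
    apply mul_le_mul (by linarith) (by linarith) (by linarith) (by positivity)
  nlinarith

lemma sq_sub_tanh_sq_le (a : ℝ) : a ^ 2 - Real.tanh a ^ 2 ≤ 2 / 3 * a ^ 4 := by
  rcases le_total 0 a with h | h
  · exact sq_sub_tanh_sq_le_aux h
  · have h' : 0 ≤ -a := by linarith
    have := sq_sub_tanh_sq_le_aux h'
    rw [Real.tanh_neg] at this
    nlinarith

/-! ### Gaussian integral computations -/

noncomputable def E (x : ℝ) : ℝ := Real.exp (-x ^ 2 / 2)

lemma hasDerivAt_E (x : ℝ) : HasDerivAt E (E x * (-x)) x := by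
  have h1 : HasDerivAt (fun x : ℝ => -x ^ 2 / 2) (-x) x := by
    have := ((hasDerivAt_pow 2 x).neg).div_const 2
    refine this.congr_deriv (Eq.symm ?_)
    push_cast; ring
  exact (Real.hasDerivAt_exp _).comp x h1

lemma integrable_xnE (n : ℕ) : Integrable (fun x : ℝ => x ^ n * E x) := by
  have h := integrable_rpow_mul_exp_neg_mul_sq (b := (1:ℝ)/2) (by norm_num)
    (s := (n : ℝ)) ((by norm_num : (-1:ℝ) < 0).trans_le (Nat.cast_nonneg n))
  convert h using 2 with x
  rw [Real.rpow_natCast]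
  unfold E
  ring_nf

lemma tendsto_xnE_atTop (n : ℕ) : Tendsto (fun x : ℝ => x ^ n * E x) atTop (𝓝 0) := by
  have h := rpow_mul_exp_neg_mul_sq_isLittleO_exp_neg (b := (1:ℝ)/2) (by norm_num) (n : ℝ)
  have hexp : Tendsto (fun x : ℝ => Real.exp (-(1/2) * x)) atTop (𝓝 0) := by
    have := Real.tendsto_exp_neg_atTop_nhds_zero.comp
      (tendsto_id.const_mul_atTop (by norm_num : (0:ℝ) < 1/2))
    refine this.congr fun x => ?_
    simp [Function.comp, neg_mul]
  have h2 : Tendsto (fun x : ℝ => x ^ (n:ℝ) * Real.exp (-(1/2) * x ^ 2)) atTop (𝓝 0) :=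
    h.isBigO.trans_tendsto hexp
  refine h2.congr fun x => ?_
  rw [Real.rpow_natCast]
  unfold E
  ring_nf

lemma tendsto_xnE_atBot (n : ℕ) : Tendsto (fun x : ℝ => x ^ n * E x) atBot (𝓝 0) := by
  have h := (((tendsto_xnE_atTop n).comp tendsto_neg_atBot_atTop).const_mul ((-1 : ℝ) ^ n))
  rw [mul_zero] at h
  refine h.congr fun x => ?_
  show (-1 : ℝ) ^ n * ((-x) ^ n * E (-x)) = x ^ n * E x
  have hE : E (-x) = E x := by unfold E; rw [neg_sq]
  rw [hE, ← mul_assoc, ← mul_pow]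
  norm_num

lemma integral_eq_zero_of_antideriv {f g : ℝ → ℝ} (hd : ∀ x, HasDerivAt g (f x) x)
    (hi : Integrable f) (ht : Tendsto g atTop (𝓝 0)) (hb : Tendsto g atBot (𝓝 0)) :
    ∫ x, f x = 0 := by
  have h1 : ∫ x in Iic (0:ℝ), f x = g 0 - 0 :=
    integral_Iic_of_hasDerivAt_of_tendsto' (fun x _ => hd x) hi.integrableOn hb
  have h2 : ∫ x in Ioi (0:ℝ), f x = 0 - g 0 :=
    integral_Ioi_of_hasDerivAt_of_tendsto' (fun x _ => hd x) hi.integrableOn ht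
  rw [← intervalIntegral.integral_Iic_add_Ioi hi.integrableOn hi.integrableOn, h1, h2]
  ring

lemma J2 : ∫ x : ℝ, x ^ 2 * E x = ∫ x : ℝ, E x := by
  have hd : ∀ x : ℝ, HasDerivAt (fun x : ℝ => -(x * E x)) (x ^ 2 * E x - E x) x := by
    intro x
    have := ((hasDerivAt_id' x).mul (hasDerivAt_E x)).neg
    refine this.congr_deriv (Eq.symm ?_)
    ring
  have h0 := integrable_xnE 0
  simp only [pow_zero, one_mul] at h0
  have hi : Integrable (fun x : ℝ => x ^ 2 * E x - E x) := (integrable_xnE 2).sub h0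
  have ht : Tendsto (fun x : ℝ => -(x * E x)) atTop (𝓝 0) := by
    have := (tendsto_xnE_atTop 1).neg
    rw [neg_zero] at this
    simpa using this
  have hb : Tendsto (fun x : ℝ => -(x * E x)) atBot (𝓝 0) := by
    have := (tendsto_xnE_atBot 1).neg
    rw [neg_zero] at this
    simpa using this
  have := integral_eq_zero_of_antideriv hd hi ht hb
  rw [integral_sub (integrable_xnE 2) h0] at this
  linarith

lemma J4 : ∫ x : ℝ, x ^ 4 * E x = 3 * ∫ x : ℝ, x ^ 2 * E x := by
  have hd : ∀ x : ℝ, HasDerivAt (fun x : ℝ => -(x ^ 3 * E x))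
      (x ^ 4 * E x - 3 * (x ^ 2 * E x)) x := by
    intro x
    have := ((hasDerivAt_pow 3 x).mul (hasDerivAt_E x)).neg
    refine this.congr_deriv (Eq.symm ?_)
    push_cast; ring
  have hi : Integrable (fun x : ℝ => x ^ 4 * E x - 3 * (x ^ 2 * E x)) :=
    (integrable_xnE 4).sub ((integrable_xnE 2).const_mul 3)
  have ht : Tendsto (fun x : ℝ => -(x ^ 3 * E x)) atTop (𝓝 0) := by
    have := (tendsto_xnE_atTop 3).neg
    rw [neg_zero] at this; exact this
  have hb : Tendsto (fun x : ℝ => -(x ^ 3 * E x)) atBot (𝓝 0) := by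
    have := (tendsto_xnE_atBot 3).neg
    rw [neg_zero] at this; exact this
  have := integral_eq_zero_of_antideriv hd hi ht hb
  rw [integral_sub (integrable_xnE 4) ((integrable_xnE 2).const_mul 3),
    MeasureTheory.integral_const_mul] at this
  linarith

/-! ### The standard Gaussian measure -/

noncomputable def pdf (x : ℝ) : ℝ := gaussianPDFReal 0 1 x

lemma pdf_eq (x : ℝ) : pdf x = (Real.sqrt (2 * π))⁻¹ * E x := by
  unfold pdf gaussianPDFReal E
  norm_num

lemma pdf_nonneg (x : ℝ) : 0 ≤ pdf x := gaussianPDFReal_nonneg 0 1 x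

lemma measurable_pdf : Measurable pdf := measurable_gaussianPDFReal 0 1

lemma integral_gauss (f : ℝ → ℝ) :
    ∫ z, f z ∂(gaussianReal 0 1) = ∫ x, pdf x * f x := by
  rw [gaussianReal_of_var_ne_zero 0 one_ne_zero]
  have h : gaussianPDF 0 1 = fun x => ((Real.toNNReal (pdf x) : ℝ≥0) : ℝ≥0∞) := rfl
  rw [h, integral_withDensity_eq_integral_smul measurable_pdf.real_toNNReal f]
  refine integral_congr_ae (Filter.Eventually.of_forall fun x => ?_)
  simp [NNReal.smul_def, Real.coe_toNNReal _ (pdf_nonneg x)]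

lemma integrable_gauss_iff (f : ℝ → ℝ) :
    Integrable f (gaussianReal 0 1) ↔ Integrable (fun x => pdf x * f x) := by
  rw [gaussianReal_of_var_ne_zero 0 one_ne_zero]
  have h : gaussianPDF 0 1 = fun x => ((Real.toNNReal (pdf x) : ℝ≥0) : ℝ≥0∞) := rfl
  rw [h, integrable_withDensity_iff_integrable_smul measurable_pdf.real_toNNReal]
  constructor <;> intro hh <;> refine hh.congr (Filter.Eventually.of_forall fun x => ?_) <;>
    simp [NNReal.smul_def, Real.coe_toNNReal _ (pdf_nonneg x)]

lemma int_pdf : ∫ x, pdf x = 1 := integral_gaussianPDFReal_eq_one 0 one_ne_zero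

lemma int_cE : (Real.sqrt (2 * π))⁻¹ * ∫ x, E x = 1 := by
  rw [← MeasureTheory.integral_const_mul, ← int_pdf]
  congr 1
  ext x
  rw [pdf_eq]

lemma int_pdf_sq : ∫ x : ℝ, pdf x * x ^ 2 = 1 := by
  have h1 : ∀ x : ℝ, pdf x * x ^ 2 = (Real.sqrt (2 * π))⁻¹ * (x ^ 2 * E x) := fun x => by
    simp only [pdf_eq]; ring
  simp_rw [h1]
  rw [MeasureTheory.integral_const_mul, J2, int_cE]

lemma int_pdf_quartic : ∫ x : ℝ, pdf x * x ^ 4 = 3 := by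
  have h1 : ∀ x : ℝ, pdf x * x ^ 4 = (Real.sqrt (2 * π))⁻¹ * (x ^ 4 * E x) := fun x => by
    simp only [pdf_eq]; ring
  simp_rw [h1]
  rw [MeasureTheory.integral_const_mul, J4, ← mul_assoc,
    mul_comm ((Real.sqrt (2 * π))⁻¹) 3, mul_assoc]
  have h2 : ∀ x : ℝ, pdf x * x ^ 2 = (Real.sqrt (2 * π))⁻¹ * (x ^ 2 * E x) := fun x => by
    simp only [pdf_eq]; ring
  have := int_pdf_sq
  simp_rw [h2, MeasureTheory.integral_const_mul] at this
  rw [this, mul_one]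

lemma int_sq_gauss : ∫ z, z ^ 2 ∂(gaussianReal 0 1) = 1 := by
  rw [integral_gauss]; exact int_pdf_sq

lemma int_quartic_gauss : ∫ z, z ^ 4 ∂(gaussianReal 0 1) = 3 := by
  rw [integral_gauss]; exact int_pdf_quartic

lemma integrable_sq_gauss : Integrable (fun z : ℝ => z ^ 2) (gaussianReal 0 1) := by
  rw [integrable_gauss_iff]
  refine ((integrable_xnE 2).const_mul ((Real.sqrt (2 * π))⁻¹)).congr
    (Filter.Eventually.of_forall fun x => ?_)
  simp only [pdf_eq]; ring

lemma integrable_quartic_gauss : Integrable (fun z : ℝ => z ^ 4) (gaussianReal 0 1) := by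
  rw [integrable_gauss_iff]
  refine ((integrable_xnE 4).const_mul ((Real.sqrt (2 * π))⁻¹)).congr
    (Filter.Eventually.of_forall fun x => ?_)
  simp only [pdf_eq]; ring

/-! ### The parametric integral -/

lemma integrable_tanh_sq (t : ℝ) :
    Integrable (fun z => Real.tanh (Real.sqrt t * z) ^ 2) (gaussianReal 0 1) := by
  have hc : Continuous fun z : ℝ => Real.tanh (Real.sqrt t * z) ^ 2 :=
    (continuous_tanh.comp (continuous_const.mul continuous_id)).pow 2
  refine (integrable_const (1 : ℝ)).mono' hc.aestronglyMeasurable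
    (Filter.Eventually.of_forall fun z => ?_)
  rw [Real.norm_eq_abs, abs_of_nonneg (sq_nonneg _)]
  exact (tanh_sq_lt_one _).le

noncomputable def G (t z : ℝ) : ℝ :=
  Real.sqrt t * z * Real.tanh (Real.sqrt t * z) * (1 - Real.tanh (Real.sqrt t * z) ^ 2) / t

lemma continuous_G (t : ℝ) : Continuous (G t) := by
  unfold G
  have h : Continuous fun z : ℝ => Real.sqrt t * z := continuous_const.mul continuous_id
  exact (((h.mul (continuous_tanh.comp h)).mul
    (continuous_const.sub ((continuous_tanh.comp h).pow 2)))).div_const t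

lemma hasDerivAt_inner {t : ℝ} (ht : 0 < t) (z : ℝ) :
    HasDerivAt (fun s => Real.tanh (Real.sqrt s * z) ^ 2) (G t z) t := by
  have hs0 : Real.sqrt t ≠ 0 := (Real.sqrt_pos.2 ht).ne'
  have h1 : HasDerivAt (fun s : ℝ => Real.sqrt s * z) (1 / (2 * Real.sqrt t) * z) t :=
    (Real.hasDerivAt_sqrt ht.ne').mul_const z
  have h2 := ((hasDerivAt_tanh (Real.sqrt t * z)).comp t h1).pow 2
  refine h2.congr_deriv (Eq.symm ?_)
  simp only [Function.comp_apply]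
  unfold G
  field_simp
  linear_combination (2 * z * Real.tanh (Real.sqrt t * z) *
    (1 - Real.tanh (Real.sqrt t * z) ^ 2)) * (Real.mul_self_sqrt ht.le)

lemma G_nonneg {t : ℝ} (ht : 0 < t) (z : ℝ) : 0 ≤ G t z :=
  div_nonneg (P_nonneg _) ht.le

lemma sq_eq {t : ℝ} (ht : 0 ≤ t) (z : ℝ) : (Real.sqrt t * z) ^ 2 = t * z ^ 2 := by
  rw [mul_pow, Real.sq_sqrt ht]

lemma G_le_sq {t : ℝ} (ht : 0 < t) (z : ℝ) : G t z ≤ z ^ 2 := by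
  unfold G
  rw [div_le_iff₀ ht]
  have := P_le_sq (Real.sqrt t * z)
  rw [sq_eq ht.le] at this
  linarith [this]

lemma sq_sub_G_le {t : ℝ} (ht : 0 < t) (z : ℝ) : z ^ 2 - G t z ≤ 4 / 3 * t * z ^ 4 := by
  have h := sq_sub_P_le (Real.sqrt t * z)
  have ha2 : (Real.sqrt t * z) ^ 2 = t * z ^ 2 := sq_eq ht.le z
  have ha4 : (Real.sqrt t * z) ^ 4 = t ^ 2 * z ^ 4 := by
    have h4 : (Real.sqrt t * z) ^ 4 = ((Real.sqrt t * z) ^ 2) ^ 2 := by ring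
    rw [h4, ha2]; ring
  rw [ha2, ha4] at h
  have e1 : z ^ 2 - G t z =
      ((Real.sqrt t * z) ^ 2 - Real.sqrt t * z * Real.tanh (Real.sqrt t * z) *
        (1 - Real.tanh (Real.sqrt t * z) ^ 2)) / t := by
    unfold G
    rw [sq_eq ht.le]
    field_simp
  rw [e1, ha2, div_le_iff₀ ht]
  nlinarith [h]

/-! ### Derivative for positive ψ -/

lemma deriv_pos_case {ψ : ℝ} (hψ : 0 < ψ) :
    Integrable (G ψ) (gaussianReal 0 1) ∧
    HasDerivAt (fun t : ℝ => ∫ z, Real.tanh (Real.sqrt t * z) ^ 2 ∂(gaussianReal 0 1))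
      (∫ z, G ψ z ∂(gaussianReal 0 1)) ψ := by
  apply hasDerivAt_integral_of_dominated_loc_of_deriv_le (s := Metric.ball ψ (ψ / 2)) (Metric.ball_mem_nhds ψ (by positivity))
    (bound := fun z : ℝ => z ^ 2)
  · exact Filter.Eventually.of_forall fun x =>
      ((continuous_tanh.comp (continuous_const.mul continuous_id)).pow 2).aestronglyMeasurable
  · exact integrable_tanh_sq ψ
  · exact (continuous_G ψ).aestronglyMeasurable
  · refine Filter.Eventually.of_forall fun z => fun x hx => ?_
    have hx0 : 0 < x := by
      rw [Metric.mem_ball, Real.dist_eq] at hx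
      have := abs_lt.1 hx
      linarith [this.1]
    rw [Real.norm_eq_abs, abs_of_nonneg (G_nonneg hx0 z)]
    exact G_le_sq hx0 z
  · exact integrable_sq_gauss
  · refine Filter.Eventually.of_forall fun z => fun x hx => ?_
    have hx0 : 0 < x := by
      rw [Metric.mem_ball, Real.dist_eq] at hx
      have := abs_lt.1 hx
      linarith [this.1]
    exact hasDerivAt_inner hx0 z

lemma d_le_one {ψ : ℝ} (hψ : 0 < ψ) (hint : Integrable (G ψ) (gaussianReal 0 1)) :
    ∫ z, G ψ z ∂(gaussianReal 0 1) ≤ 1 := by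
  rw [← int_sq_gauss]
  exact integral_mono hint integrable_sq_gauss fun z => G_le_sq hψ z

lemma d_nonneg {ψ : ℝ} (hψ : 0 < ψ) :
    0 ≤ ∫ z, G ψ z ∂(gaussianReal 0 1) :=
  integral_nonneg fun z => G_nonneg hψ z

lemma d_ge {ψ : ℝ} (hψ : 0 < ψ) (hint : Integrable (G ψ) (gaussianReal 0 1)) :
    1 - 4 * ψ ≤ ∫ z, G ψ z ∂(gaussianReal 0 1) := by
  have h1 : ∫ z, (z ^ 2 - G ψ z) ∂(gaussianReal 0 1) ≤
      ∫ z, 4 / 3 * ψ * z ^ 4 ∂(gaussianReal 0 1) := by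
    apply integral_mono (integrable_sq_gauss.sub hint)
      (integrable_quartic_gauss.const_mul _)
    exact fun z => sq_sub_G_le hψ z
  rw [integral_sub integrable_sq_gauss hint, int_sq_gauss,
    MeasureTheory.integral_const_mul, int_quartic_gauss] at h1
  linarith

/-! ### Derivative at 0 -/

lemma F_zero : ∫ z, Real.tanh (Real.sqrt 0 * z) ^ 2 ∂(gaussianReal 0 1) = 0 := by
  simp [Real.sqrt_zero, Real.tanh_zero]

lemma F_near {t : ℝ} (ht : 0 ≤ t) :
    |(∫ z, Real.tanh (Real.sqrt t * z) ^ 2 ∂(gaussianReal 0 1)) - t| ≤ 2 * t ^ 2 := by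
  have hsub : (∫ z, Real.tanh (Real.sqrt t * z) ^ 2 ∂(gaussianReal 0 1)) - t =
      ∫ z, (Real.tanh (Real.sqrt t * z) ^ 2 - t * z ^ 2) ∂(gaussianReal 0 1) := by
    rw [integral_sub (integrable_tanh_sq t) (integrable_sq_gauss.const_mul t),
      MeasureTheory.integral_const_mul, int_sq_gauss, mul_one]
  rw [hsub]
  have hb : ∀ z : ℝ, |Real.tanh (Real.sqrt t * z) ^ 2 - t * z ^ 2| ≤ 2 / 3 * t ^ 2 * z ^ 4 := by
    intro z
    have ha2 : (Real.sqrt t * z) ^ 2 = t * z ^ 2 := sq_eq ht z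
    have ha4 : (Real.sqrt t * z) ^ 4 = t ^ 2 * z ^ 4 := by
      have : (Real.sqrt t * z) ^ 4 = ((Real.sqrt t * z) ^ 2) ^ 2 := by ring
      rw [this, ha2]; ring
    have h1 := sq_sub_tanh_sq_le (Real.sqrt t * z)
    have h2 := tanh_sq_le_sq (Real.sqrt t * z)
    rw [ha2, ha4] at h1
    rw [ha2] at h2
    rw [abs_le]
    constructor
    · nlinarith [mul_nonneg (sq_nonneg t) (pow_nonneg (sq_nonneg z) 2)]
    · nlinarith [mul_nonneg (sq_nonneg t) (pow_nonneg (sq_nonneg z) 2)]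
  calc |∫ z, (Real.tanh (Real.sqrt t * z) ^ 2 - t * z ^ 2) ∂(gaussianReal 0 1)|
      ≤ ∫ z, |Real.tanh (Real.sqrt t * z) ^ 2 - t * z ^ 2| ∂(gaussianReal 0 1) := by
        simpa [Real.norm_eq_abs] using norm_integral_le_integral_norm
          (fun z => Real.tanh (Real.sqrt t * z) ^ 2 - t * z ^ 2) (μ := gaussianReal 0 1)
    _ ≤ ∫ z, 2 / 3 * t ^ 2 * z ^ 4 ∂(gaussianReal 0 1) := by
        apply integral_mono ((integrable_tanh_sq t).sub (integrable_sq_gauss.const_mul t)).abs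
          (integrable_quartic_gauss.const_mul _) hb
    _ = 2 * t ^ 2 := by
        rw [MeasureTheory.integral_const_mul, int_quartic_gauss]; ring

lemma deriv_zero_case :
    HasDerivWithinAt (fun t : ℝ => ∫ z, Real.tanh (Real.sqrt t * z) ^ 2 ∂(gaussianReal 0 1))
      1 (Set.Ici 0) 0 := by
  rw [hasDerivWithinAt_iff_isLittleO, Asymptotics.isLittleO_iff]
  intro c hc
  have h1 : ∀ᶠ t in nhdsWithin (0:ℝ) (Set.Ici 0), |t - 0| < c / 2 :=
    eventually_nhdsWithin_of_eventually_nhds (eventually_abs_sub_lt 0 (by positivity))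
  filter_upwards [h1, self_mem_nhdsWithin] with t h1 h2
  have ht : (0:ℝ) ≤ t := h2
  rw [sub_zero] at h1
  have hF := F_near ht
  have habs : |t| = t := abs_of_nonneg ht
  rw [habs] at h1
  simp only [F_zero, sub_zero, smul_eq_mul, mul_one, Real.norm_eq_abs]
  calc |(∫ z, Real.tanh (Real.sqrt t * z) ^ 2 ∂(gaussianReal 0 1)) - t|
      ≤ 2 * t ^ 2 := hF
    _ ≤ c * |t| := by rw [habs]; nlinarith

end QbarAux

/-- With `q̄(ψ) = E[tanh(√ψ Z)²]` for a standard Gaussian `Z`, for every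
`ψ ≥ 0` the derivative of `q̄` (taken within `[0,∞)`) satisfies
`max{0, 1 − 4ψ} ≤ q̄'(ψ) ≤ 1`. -/
theorem qbar_deriv_bounds (ψ : ℝ) (hψ : 0 ≤ ψ) :
    ∃ d : ℝ,
      HasDerivWithinAt
        (fun t : ℝ => ∫ z, Real.tanh (Real.sqrt t * z) ^ 2 ∂(gaussianReal 0 1))
        d (Set.Ici 0) ψ ∧
      max 0 (1 - 4 * ψ) ≤ d ∧ d ≤ 1 := by
  rcases hψ.eq_or_lt with h | h
  · refine ⟨1, ?_, ?_, le_refl 1⟩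
    · rw [← h]
      exact QbarAux.deriv_zero_case
    · rw [← h]
      norm_num
  · obtain ⟨hint, hder⟩ := QbarAux.deriv_pos_case h
    refine ⟨∫ z, QbarAux.G ψ z ∂(gaussianReal 0 1), hder.hasDerivWithinAt, ?_, QbarAux.d_le_one h hint⟩
    exact max_le (QbarAux.d_nonneg h) (QbarAux.d_ge h hint)
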